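/- The marginal informational gain of additional signals decays exponentially: fix a real ρ with 1/2 < ρ ≤ 1. For every odd natural number n and every m ≥ n, 0 ≤ P*(m) − P*(n) ≤ exp(−2 · n · (ρ − 1/2)²) (the left inequality says P* is nondecreasing, since a rule on m signals may ignore the extra ones). Consequently, for every c > 0 there exists N such that for all n ≥ N and all m ≥ n, the expected gain in success probability from reading the signals beyond the first n is less than c. -/

import Mathlib

open Finset

/-- The weight that the distribution `μ_n` puts on the outcome `(b, s)`:
the bit `b` is uniform on `Bool`, and conditional on `b` the signals are
independent, each equal to `b` with probability `ρ`. -/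
noncomputable def signalWeight (ρ : ℝ) (n : ℕ) (b : Bool) (s : Fin n → Bool) : ℝ :=
  (1 / 2) * ∏ i : Fin n, (if s i = b then ρ else 1 - ρ)

/-- The success probability `P_n(f) = μ_n {(b, s) : f s = b}` of a decision
rule `f`. -/
noncomputable def successProb (ρ : ℝ) (n : ℕ) (f : (Fin n → Bool) → Bool) : ℝ :=
  ∑ b : Bool, ∑ s : Fin n → Bool, if f s = b then signalWeight ρ n b s else 0

/-- `P*(n)`: the supremum over all decision rules of the success
probability with `n` signals. -/
noncomputable def Pstar (ρ : ℝ) (n : ℕ) : ℝ :=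
  ⨆ f : (Fin n → Bool) → Bool, successProb ρ n f

lemma sumProdBool (ρ : ℝ) (n : ℕ) (b : Bool) :
    ∑ s : Fin n → Bool, ∏ i, (if s i = b then ρ else 1 - ρ) = 1 := by
  have h : (∑ s : Fin n → Bool, ∏ i, (if s i = b then ρ else 1 - ρ))
      = (∑ x : Bool, if x = b then ρ else 1 - ρ) ^ n :=
    (Fintype.sum_pow (fun x : Bool => if x = b then ρ else 1 - ρ) n).symm
  rw [h]
  have : (∑ x : Bool, if x = b then ρ else 1 - ρ) = 1 := by
    cases b <;> simp [Fintype.sum_bool]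
  rw [this, one_pow]

lemma signalWeight_nonneg {ρ : ℝ} (h0 : 0 ≤ ρ) (h1 : ρ ≤ 1) (n : ℕ) (b : Bool)
    (s : Fin n → Bool) : 0 ≤ signalWeight ρ n b s := by
  unfold signalWeight
  apply mul_nonneg (by norm_num)
  exact Finset.prod_nonneg fun i _ => by split <;> linarith

lemma signalWeight_mass (ρ : ℝ) (n : ℕ) :
    ∑ b : Bool, ∑ s : Fin n → Bool, signalWeight ρ n b s = 1 := by
  have : ∀ b : Bool, ∑ s : Fin n → Bool, signalWeight ρ n b s = 1 / 2 := by
    intro b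
    unfold signalWeight
    rw [← Finset.mul_sum, sumProdBool, mul_one]
  simp [this]

lemma successProb_le_one {ρ : ℝ} (h0 : 0 ≤ ρ) (h1 : ρ ≤ 1) (n : ℕ)
    (f : (Fin n → Bool) → Bool) : successProb ρ n f ≤ 1 := by
  unfold successProb
  rw [show (1:ℝ) = ∑ b : Bool, ∑ s : Fin n → Bool, signalWeight ρ n b s from
    (signalWeight_mass ρ n).symm]
  refine Finset.sum_le_sum fun b _ => Finset.sum_le_sum fun s _ => ?_
  split
  · exact le_rfl
  · exact signalWeight_nonneg h0 h1 n b s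

lemma le_Pstar (ρ : ℝ) (n : ℕ) (f : (Fin n → Bool) → Bool) :
    successProb ρ n f ≤ Pstar ρ n :=
  le_ciSup (Set.Finite.bddAbove (Set.finite_range _)) f

lemma Pstar_le_one {ρ : ℝ} (h0 : 0 ≤ ρ) (h1 : ρ ≤ 1) (n : ℕ) : Pstar ρ n ≤ 1 :=
  ciSup_le fun f => successProb_le_one h0 h1 n f

lemma successProb_tail (ρ : ℝ) (n : ℕ) (f : (Fin n → Bool) → Bool) :
    successProb ρ (n + 1) (fun s => f (Fin.tail s)) = successProb ρ n f := by
  unfold successProb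
  refine Finset.sum_congr rfl fun b _ => ?_
  rw [← Equiv.sum_comp (Fin.consEquiv (fun _ : Fin (n + 1) => Bool))
      (fun s => if f (Fin.tail s) = b then signalWeight ρ (n + 1) b s else 0)]
  rw [Fintype.sum_prod_type]
  have key : ∀ (x : Bool) (t : Fin n → Bool),
      (if f (Fin.tail ((Fin.consEquiv (fun _ : Fin (n + 1) => Bool)) (x, t))) = b
        then signalWeight ρ (n + 1) b ((Fin.consEquiv (fun _ : Fin (n + 1) => Bool)) (x, t))
        else 0)
      = (if x = b then ρ else 1 - ρ) * (if f t = b then signalWeight ρ n b t else 0) := by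
    intro x t
    have hc : (Fin.consEquiv (fun _ : Fin (n + 1) => Bool)) (x, t) = Fin.cons x t := rfl
    rw [hc, Fin.tail_cons]
    have e2 : signalWeight ρ (n + 1) b (Fin.cons x t) =
        (if x = b then ρ else 1 - ρ) * signalWeight ρ n b t := by
      unfold signalWeight
      rw [Fin.prod_univ_succ]
      simp only [Fin.cons_zero, Fin.cons_succ]
      ring
    rw [e2]
    split <;> simp
  calc ∑ x : Bool, ∑ t : Fin n → Bool,
        (if f (Fin.tail ((Fin.consEquiv (fun _ : Fin (n + 1) => Bool)) (x, t))) = b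
          then signalWeight ρ (n + 1) b ((Fin.consEquiv (fun _ : Fin (n + 1) => Bool)) (x, t))
          else 0)
      = ∑ x : Bool, ∑ t : Fin n → Bool,
          (if x = b then ρ else 1 - ρ) * (if f t = b then signalWeight ρ n b t else 0) := by
        exact Finset.sum_congr rfl fun x _ => Finset.sum_congr rfl fun t _ => key x t
    _ = (∑ x : Bool, if x = b then ρ else 1 - ρ) *
          (∑ t : Fin n → Bool, if f t = b then signalWeight ρ n b t else 0) := by
        rw [Finset.sum_mul_sum]
    _ = ∑ t : Fin n → Bool, if f t = b then signalWeight ρ n b t else 0 := by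
        have : (∑ x : Bool, if x = b then ρ else 1 - ρ) = 1 := by
          cases b <;> simp [Fintype.sum_bool]
        rw [this, one_mul]

lemma Pstar_mono (ρ : ℝ) {n m : ℕ} (h : n ≤ m) : Pstar ρ n ≤ Pstar ρ m := by
  induction m, h using Nat.le_induction with
  | base => exact le_rfl
  | succ m hm ih =>
    refine le_trans ih (ciSup_le fun f => ?_)
    rw [← successProb_tail ρ m f]
    exact le_Pstar ρ (m + 1) _

lemma pow_half_bound {ρ q : ℝ} (hq : 0 ≤ q) (hqρ : q ≤ ρ) {k l n : ℕ}
    (hkl : k + l = n) (hk : k ≤ l) :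
    ρ ^ k * q ^ l ≤ (ρ * q) ^ ((n : ℝ) / 2) := by
  have hρ0 : 0 ≤ ρ := le_trans hq hqρ
  have hpq0 : 0 ≤ ρ * q := mul_nonneg hρ0 hq
  set a := Real.sqrt (ρ * q) with ha
  have ha0 : 0 ≤ a := Real.sqrt_nonneg _
  have hqa : q ≤ a := by
    have hq2 : q = Real.sqrt (q ^ 2) := (Real.sqrt_sq hq).symm
    rw [ha]
    nth_rewrite 1 [hq2]
    exact Real.sqrt_le_sqrt (by nlinarith)
  have ha2 : a ^ 2 = ρ * q := Real.sq_sqrt hpq0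
  have step1 : ρ ^ k * q ^ l = (ρ * q) ^ k * q ^ (l - k) := by
    rw [mul_pow, mul_assoc, ← pow_add]
    congr 2
    omega
  have step2 : (ρ * q) ^ k * q ^ (l - k) ≤ (ρ * q) ^ k * a ^ (l - k) :=
    mul_le_mul_of_nonneg_left (pow_le_pow_left₀ hq hqa _) (pow_nonneg hpq0 k)
  have step3 : (ρ * q) ^ k * a ^ (l - k) = a ^ n := by
    rw [← ha2, ← pow_mul, ← pow_add]
    congr 1
    omega
  have step4 : a ^ n = (ρ * q) ^ ((n : ℝ) / 2) := by
    rw [← Real.rpow_natCast a n, ha, Real.sqrt_eq_rpow, ← Real.rpow_mul hpq0]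
    congr 1
    ring
  calc ρ ^ k * q ^ l = (ρ * q) ^ k * q ^ (l - k) := step1
    _ ≤ (ρ * q) ^ k * a ^ (l - k) := step2
    _ = a ^ n := step3
    _ = (ρ * q) ^ ((n : ℝ) / 2) := step4

lemma majority_bound {ρ : ℝ} (hρ : 1 / 2 < ρ) (hρ1 : ρ ≤ 1) {n : ℕ} (hn : Odd n) :
    1 - Real.exp (-2 * n * (ρ - 1 / 2) ^ 2) ≤ Pstar ρ n := by
  have h0 : (0 : ℝ) ≤ ρ := by linarith
  have hq0 : (0 : ℝ) ≤ 1 - ρ := by linarith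
  have hqρ : 1 - ρ ≤ ρ := by linarith
  have hpq0 : (0 : ℝ) ≤ ρ * (1 - ρ) := mul_nonneg h0 hq0
  set maj : (Fin n → Bool) → Bool :=
    fun s => decide (n ≤ 2 * (univ.filter (fun i => s i = true)).card) with hmaj
  set M : ℝ := (ρ * (1 - ρ)) ^ ((n : ℝ) / 2) with hM
  have hM0 : 0 ≤ M := Real.rpow_nonneg hpq0 _
  -- per-term bound on wrong outcomes
  have hterm : ∀ (b : Bool) (s : Fin n → Bool), maj s ≠ b →
      signalWeight ρ n b s ≤ 1 / 2 * M := by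
    intro b s hws
    set k := (univ.filter (fun i => s i = b)).card with hk
    set l := (univ.filter (fun i => ¬ s i = b)).card with hl
    have hkl : k + l = n := by
      rw [hk, hl]
      simpa using Finset.card_filter_add_card_filter_not
        (s := (univ : Finset (Fin n))) (p := fun i => s i = b)
    have hprod : ∏ i : Fin n, (if s i = b then ρ else 1 - ρ) = ρ ^ k * (1 - ρ) ^ l := by
      rw [Finset.prod_ite (fun _ => ρ) (fun _ => 1 - ρ), Finset.prod_const, Finset.prod_const]
    have h2k : 2 * k < n := by
      set c := (univ.filter (fun i => s i = true)).card with hc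
      have hcn : c ≤ n := by
        simpa using Finset.card_filter_le (univ : Finset (Fin n)) (fun i => s i = true)
      cases b with
      | true =>
        have : ¬ (n ≤ 2 * c) := by
          intro h
          apply hws
          simp [hmaj, h]
          rw [← hc]; exact h
        have hkc : k = c := rfl
        omega
      | false =>
        have hmt : n ≤ 2 * c := by
          by_contra h
          apply hws
          simp [hmaj, h]
          rw [← hc]; omega
        have hlc : l = c := by
          rw [hl, hc]
          congr 1
          ext i
          cases hsi : s i <;> simp [hsi]
        obtain ⟨j, hj⟩ := hn
        omega
    have hkle : k ≤ l := by omega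
    have := pow_half_bound hq0 hqρ hkl hkle
    unfold signalWeight
    rw [hprod, hM]
    linarith
  -- error decomposition
  set err : ℝ := ∑ b : Bool, ∑ s : Fin n → Bool,
    (if maj s = b then 0 else signalWeight ρ n b s) with herr
  have hsplit : successProb ρ n maj + err = 1 := by
    rw [herr]
    unfold successProb
    rw [← Finset.sum_add_distrib]
    rw [show (1:ℝ) = ∑ b : Bool, ∑ s : Fin n → Bool, signalWeight ρ n b s from
      (signalWeight_mass ρ n).symm]
    refine Finset.sum_congr rfl fun b _ => ?_
    rw [← Finset.sum_add_distrib]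
    refine Finset.sum_congr rfl fun s _ => ?_
    split <;> simp
  have herrle : err ≤ Real.exp (-2 * n * (ρ - 1 / 2) ^ 2) := by
    have step1 : err ≤ ∑ b : Bool, ∑ s : Fin n → Bool, 1 / 2 * M := by
      rw [herr]
      refine Finset.sum_le_sum fun b _ => Finset.sum_le_sum fun s _ => ?_
      split
      · positivity
      · exact hterm b s (by assumption)
    have card_fun : (Finset.univ : Finset (Fin n → Bool)).card = 2 ^ n := by
      simp [Finset.card_univ]
    have step2 : (∑ b : Bool, ∑ s : Fin n → Bool, (1 / 2 * M : ℝ)) = 2 ^ n * M := by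
      rw [Finset.sum_const, Finset.sum_const, card_fun]
      simp [nsmul_eq_mul]
      ring
    have step3 : (2 : ℝ) ^ n * M = (4 * (ρ * (1 - ρ))) ^ ((n : ℝ) / 2) := by
      rw [Real.mul_rpow (by norm_num) hpq0, hM]
      congr 1
      rw [show (4 : ℝ) = (2 : ℝ) ^ (2 : ℕ) by norm_num, ← Real.rpow_natCast (2:ℝ) 2,
        ← Real.rpow_mul (by norm_num), ← Real.rpow_natCast (2:ℝ) n]
      congr 1
      push_cast
      ring
    have step4 : (4 * (ρ * (1 - ρ))) ^ ((n : ℝ) / 2)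
        ≤ Real.exp (-2 * n * (ρ - 1 / 2) ^ 2) := by
      have hb : 4 * (ρ * (1 - ρ)) ≤ Real.exp (-(4 * (ρ - 1 / 2) ^ 2)) := by
        have := Real.add_one_le_exp (-(4 * (ρ - 1 / 2) ^ 2))
        nlinarith
      have hb0 : (0 : ℝ) ≤ 4 * (ρ * (1 - ρ)) := by positivity
      calc (4 * (ρ * (1 - ρ))) ^ ((n : ℝ) / 2)
          ≤ (Real.exp (-(4 * (ρ - 1 / 2) ^ 2))) ^ ((n : ℝ) / 2) :=
            Real.rpow_le_rpow hb0 hb (by positivity)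
        _ = Real.exp (-2 * n * (ρ - 1 / 2) ^ 2) := by
            rw [← Real.exp_mul]
            congr 1
            ring
    linarith
  have := le_Pstar ρ n maj
  linarith

/-- The marginal informational gain of additional signals decays
exponentially: for odd `n` and `m ≥ n`,
`0 ≤ P*(m) − P*(n) ≤ exp(−2 n (ρ − 1/2)²)`; consequently, for every
`c > 0` there is an `N` such that for all `n ≥ N` and `m ≥ n` the gain in
success probability from the signals beyond the first `n` is below `c`. -/
theorem marginal_gain_decays (ρ : ℝ) (hρ : 1 / 2 < ρ) (hρ1 : ρ ≤ 1) :
    (∀ n m : ℕ, Odd n → n ≤ m →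
      0 ≤ Pstar ρ m - Pstar ρ n ∧
      Pstar ρ m - Pstar ρ n ≤ Real.exp (-2 * n * (ρ - 1 / 2) ^ 2)) ∧
    (∀ c : ℝ, 0 < c → ∃ N : ℕ, ∀ n m : ℕ, N ≤ n → n ≤ m →
      Pstar ρ m - Pstar ρ n < c) := by
  have h0 : (0 : ℝ) ≤ ρ := by linarith
  have main : ∀ n m : ℕ, Odd n → n ≤ m →
      0 ≤ Pstar ρ m - Pstar ρ n ∧
      Pstar ρ m - Pstar ρ n ≤ Real.exp (-2 * n * (ρ - 1 / 2) ^ 2) := by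
    intro n m hodd hnm
    refine ⟨sub_nonneg.mpr (Pstar_mono ρ hnm), ?_⟩
    have h1 := Pstar_le_one h0 hρ1 m
    have h2 := majority_bound hρ hρ1 hodd
    linarith
  refine ⟨main, fun c hc => ?_⟩
  have hx : (0 : ℝ) < (ρ - 1 / 2) ^ 2 := pow_pos (by linarith) 2
  set r := Real.exp (-(2 * (ρ - 1 / 2) ^ 2)) with hr
  have hr1 : r < 1 := Real.exp_lt_one_iff.mpr (by linarith)
  have hr0 : (0 : ℝ) ≤ r := le_of_lt (Real.exp_pos _)
  obtain ⟨K, hK⟩ := exists_pow_lt_of_lt_one hc hr1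
  refine ⟨K + 2, fun n m hn hnm => ?_⟩
  set n' := if Even n then n - 1 else n with hn'
  have hodd : Odd n' := by
    by_cases h : Even n
    · simp only [hn', if_pos h]
      exact Nat.Even.sub_odd (by omega) h odd_one
    · simp only [hn', if_neg h]
      exact Nat.not_even_iff_odd.mp h
  have hle : n' ≤ n := by
    by_cases h : Even n <;> simp [hn', h] <;> omega
  have hKn' : K ≤ n' := by
    by_cases h : Even n <;> simp [hn', h] <;> omega
  have h1 := (main n' m hodd (le_trans hle hnm)).2
  have h2 : Pstar ρ n' ≤ Pstar ρ n := Pstar_mono ρ hle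
  have h3 : Real.exp (-2 * n' * (ρ - 1 / 2) ^ 2) = r ^ n' := by
    rw [hr, ← Real.exp_nat_mul]
    congr 1
    ring
  have h4 : r ^ n' ≤ r ^ K := pow_le_pow_of_le_one hr0 (le_of_lt hr1) hKn'
  calc Pstar ρ m - Pstar ρ n ≤ Pstar ρ m - Pstar ρ n' := by linarith
    _ ≤ Real.exp (-2 * n' * (ρ - 1 / 2) ^ 2) := h1
    _ = r ^ n' := h3
    _ ≤ r ^ K := h4
    _ < c := hK
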